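/- arXiv:2001.05176 — 2 statements merged into one kernel-verified Lean document; each statement's English description precedes it below -/
import Mathlib

section
/- Let f(x) = α Σ_{κ=0}^{m-1} ζ(κ) x^κ e^{-(β-δ)x} for x ≥ 0 be the shadowed-Rician density with integer m ≥ 1, where α = (2bm/(2bm+Ω))^m/(2b), β = 1/(2b), δ = Ω/((2b)(2bm+Ω)), ζ(κ) = (-1)^κ (1-m)_κ δ^κ/(κ!)², with b, Ω > 0. Then ∫₀^∞ f(x) dx = 1. -/
open Real

open MeasureTheory in
lemma sr_integrableOn_pow_mul_exp (κ : ℕ) {l : ℝ} (hl : 0 < l) :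
    IntegrableOn (fun x : ℝ => x ^ κ * Real.exp (-(l * x))) (Set.Ioi 0) := by
  have h := Real.GammaIntegral_convergent (s := (κ : ℝ) + 1) (by positivity)
  rw [← mul_zero l, ← integrableOn_Ioi_comp_mul_left_iff _ _ hl] at h
  have h2 : IntegrableOn (fun x : ℝ =>
      (l ^ κ)⁻¹ * (Real.exp (-(l * x)) * (l * x) ^ ((κ : ℝ) + 1 - 1))) (Set.Ioi 0) :=
    h.const_mul _
  refine h2.congr_fun (fun x hx => ?_) measurableSet_Ioi
  simp only [add_sub_cancel_right, Real.rpow_natCast, mul_pow]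
  field_simp

open MeasureTheory in
lemma sr_integral_pow_mul_exp (κ : ℕ) {l : ℝ} (hl : 0 < l) :
    ∫ x in Set.Ioi (0 : ℝ), x ^ κ * Real.exp (-(l * x))
      = (Nat.factorial κ : ℝ) / l ^ (κ + 1) := by
  have h := Real.integral_rpow_mul_exp_neg_mul_Ioi (a := (κ : ℝ) + 1) (by positivity) hl
  rw [add_sub_cancel_right] at h
  have heq : ∀ x ∈ Set.Ioi (0 : ℝ),
      x ^ (κ : ℝ) * Real.exp (-(l * x)) = x ^ κ * Real.exp (-(l * x)) := by
    intro x _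
    rw [Real.rpow_natCast]
  rw [setIntegral_congr_fun measurableSet_Ioi heq] at h
  rw [h, Real.Gamma_nat_eq_factorial]
  have : ((1 : ℝ) / l) ^ ((κ : ℝ) + 1) = (1 / l) ^ (κ + 1) := by
    rw [show ((κ : ℝ) + 1) = ((κ + 1 : ℕ) : ℝ) by push_cast; ring, Real.rpow_natCast]
  rw [this, div_pow, one_pow]
  ring

theorem shadowed_rician_density_integrates_to_one
    (b Omg : ℝ) (hb : 0 < b) (hOmg : 0 < Omg) (m : ℕ) (hm : 1 ≤ m)
    (α β δ : ℝ) (ζ : ℕ → ℝ)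
    (hα : α = (2 * b * m / (2 * b * m + Omg)) ^ m / (2 * b))
    (hβ : β = 1 / (2 * b))
    (hδ : δ = Omg / ((2 * b) * (2 * b * m + Omg)))
    (hζ : ∀ κ, ζ κ = (-1) ^ κ * (ascPochhammer ℝ κ).eval (1 - (m : ℝ)) * δ ^ κ /
        ((Nat.factorial κ : ℝ)) ^ 2) :
    ∫ x in Set.Ioi (0 : ℝ),
        α * ∑ κ ∈ Finset.range m, ζ κ * x ^ κ * Real.exp (-(β - δ) * x) = 1 := by
  obtain ⟨n, rfl⟩ : ∃ n, m = n + 1 := ⟨m - 1, (Nat.succ_pred_eq_of_pos hm).symm⟩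
  have hN0 : (0 : ℝ) < ((n + 1 : ℕ) : ℝ) := by positivity
  have hden : (0 : ℝ) < 2 * b * ((n + 1 : ℕ) : ℝ) + Omg := by positivity
  set c : ℝ := 2 * b * ((n + 1 : ℕ) : ℝ) / (2 * b * ((n + 1 : ℕ) : ℝ) + Omg) with hc
  have hc0 : 0 < c := by positivity
  have hβ0 : 0 < β := by rw [hβ]; positivity
  have hl2 : β - δ = β * c := by
    rw [hβ, hδ, hc]
    field_simp
    ring
  have hl0 : 0 < β - δ := by rw [hl2]; positivity
  have hl' : β - δ ≠ 0 := ne_of_gt hl0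
  -- pull out the constant and swap integral with finite sum
  simp_rw [neg_mul]
  rw [MeasureTheory.integral_const_mul,
    MeasureTheory.integral_finset_sum _ (fun κ _ => by
      simp_rw [mul_assoc]
      exact ((sr_integrableOn_pow_mul_exp κ hl0).const_mul (ζ κ)))]
  have key : ∀ κ : ℕ, (∫ x in Set.Ioi (0 : ℝ), ζ κ * x ^ κ * Real.exp (-((β - δ) * x)))
      = ζ κ * ((Nat.factorial κ : ℝ) / (β - δ) ^ (κ + 1)) := by
    intro κ
    simp_rw [mul_assoc]
    rw [MeasureTheory.integral_const_mul, sr_integral_pow_mul_exp κ hl0]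
  simp only [key]
  -- evaluate each summand
  have hterm : ∀ κ ∈ Finset.range (n + 1),
      ζ κ * ((Nat.factorial κ : ℝ) / (β - δ) ^ (κ + 1))
        = (δ ^ κ * (β - δ) ^ (n - κ) * (n.choose κ : ℝ)) / (β - δ) ^ (n + 1) := by
    intro κ hκ
    have hκn : κ ≤ n := Nat.lt_succ_iff.mp (Finset.mem_range.mp hκ)
    have hasc : (-1 : ℝ) ^ κ * (ascPochhammer ℝ κ).eval (1 - ((n + 1 : ℕ) : ℝ))
        = (n.choose κ : ℝ) * (Nat.factorial κ : ℝ) := by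
      rw [show (1 : ℝ) - ((n + 1 : ℕ) : ℝ) = -(n : ℝ) by push_cast; ring,
        ascPochhammer_eval_neg_eq_descPochhammer, descPochhammer_eval_eq_descFactorial,
        ← mul_assoc, ← mul_pow]
      norm_num
      rw [Nat.descFactorial_eq_factorial_mul_choose]
      push_cast
      ring
    rw [hζ κ, hasc]
    have h3 : (β - δ) ^ (n + 1) = (β - δ) ^ (κ + 1) * (β - δ) ^ (n - κ) := by
      rw [← pow_add]
      congr 1
      omega
    have hκ! : (Nat.factorial κ : ℝ) ≠ 0 := Nat.cast_ne_zero.mpr κ.factorial_ne_zero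
    rw [h3]
    field_simp
  rw [Finset.sum_congr rfl hterm, ← Finset.sum_div]
  have hbin : ∑ κ ∈ Finset.range (n + 1),
      δ ^ κ * (β - δ) ^ (n - κ) * (n.choose κ : ℝ) = β ^ n := by
    rw [← add_pow]
    ring_nf
  rw [hbin]
  -- final algebraic identity
  have hα2 : α = c ^ (n + 1) * β := by
    rw [hα, hβ, hc]
    field_simp
  rw [hα2, hl2, mul_pow]
  have hcne : c ≠ 0 := ne_of_gt hc0
  have hβne : β ≠ 0 := ne_of_gt hβ0
  field_simp
  ring
end

section
/- For β > δ ≥ 0, integer m ≥ 1, and ζ(κ) = (-1)^κ (1-m)_κ δ^κ/(κ!)², the cumulative distribution function of the density f(x) = α Σ_{κ=0}^{m-1} ζ(κ) x^κ e^{-(β-δ)x} satisfies F(t) = 1 - α Σ_{l=0}^{m-1} ζ(l) Σ_{p=0}^{l} (l!/p!) (β-δ)^{-(l+1-p)} t^p e^{-(β-δ)t} for all t ≥ 0. -/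
open Real


lemma aux_hasDerivAt (c : ℝ) (hc : c ≠ 0) (n : ℕ) (x : ℝ) :
    HasDerivAt (fun y : ℝ => -∑ p ∈ Finset.range (n+1),
      (Nat.factorial n : ℝ) / (Nat.factorial p : ℝ) * c ^ ((p : ℤ) - (n+1)) * y ^ p *
        Real.exp (-c * y))
      (x ^ n * Real.exp (-c * x)) x := by
  induction n with
  | zero =>
    have h1 : HasDerivAt (fun y : ℝ => Real.exp (-c * y)) (Real.exp (-c * x) * (-c)) x :=
      by simpa using ((hasDerivAt_id x).const_mul (-c)).exp
    have h2 := (h1.const_mul (c ^ ((0:ℤ) - 1))).neg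
    convert h2 using 1
    · rfl
    · rfl
    · funext y
      simp [Finset.sum_range_one]
    · have hz : c ^ ((0:ℤ) - 1) = c⁻¹ := by norm_num
      rw [hz]
      field_simp
  | succ n ih =>
    have hpow : HasDerivAt (fun y : ℝ => y ^ (n+1)) (((n:ℝ)+1) * x ^ n) x := by
      simpa using hasDerivAt_pow (n+1) x
    have hexp : HasDerivAt (fun y : ℝ => Real.exp (-c * y)) (Real.exp (-c * x) * (-c)) x :=
      by simpa using ((hasDerivAt_id x).const_mul (-c)).exp
    have hprod := hpow.mul hexp
    have hder := (ih.const_mul (((n:ℝ)+1)/c)).sub (hprod.const_mul c⁻¹)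
    convert hder using 1
    · rfl
    · rfl
    · funext y
      rw [Finset.sum_range_succ]
      have h1 : ∑ p ∈ Finset.range (n+1),
          (Nat.factorial (n+1) : ℝ) / (Nat.factorial p : ℝ) * c ^ ((p : ℤ) - ((n:ℕ)+1+1)) *
            y ^ p * Real.exp (-c * y)
          = ((n:ℝ)+1)/c * ∑ p ∈ Finset.range (n+1),
              (Nat.factorial n : ℝ) / (Nat.factorial p : ℝ) * c ^ ((p : ℤ) - ((n:ℕ)+1)) *
                y ^ p * Real.exp (-c * y) := by
        rw [Finset.mul_sum]
        apply Finset.sum_congr rfl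
        intro p hp
        have hfac : (Nat.factorial (n+1) : ℝ) = ((n:ℝ)+1) * (Nat.factorial n : ℝ) := by
          push_cast [Nat.factorial_succ]; ring
        have hz : c ^ ((p : ℤ) - ((n:ℕ)+1+1)) = c ^ ((p : ℤ) - ((n:ℕ)+1)) * c⁻¹ := by
          rw [← zpow_neg_one c, ← zpow_add₀ hc]
          congr 1; push_cast; ring
        rw [hfac, hz]
        field_simp
      have h2 : c ^ (((n+1 : ℕ) : ℤ) - ((n:ℕ)+1+1)) = c⁻¹ := by
        have he : ((n+1 : ℕ) : ℤ) - ((n:ℕ)+1+1) = -1 := by push_cast; ring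
        rw [he, zpow_neg_one]
      push_cast
      push_cast at h1 h2
      rw [h1, h2]
      have hfac2 : ((n+1).factorial : ℝ) / ((n+1).factorial : ℝ) = 1 := by
        rw [div_self]
        positivity
      push_cast at hfac2
      rw [hfac2]
      simp only [Pi.sub_apply, Pi.mul_apply]
      ring
    · field_simp
      ring

lemma aux_integral (c : ℝ) (hc : 0 < c) (n : ℕ) (t : ℝ) :
    ∫ x in (0:ℝ)..t, x ^ n * Real.exp (-c * x) =
      (Nat.factorial n : ℝ) / c ^ (n+1) -
        ∑ p ∈ Finset.range (n+1),
          (Nat.factorial n : ℝ) / (Nat.factorial p : ℝ) * c ^ ((p : ℤ) - (n+1)) * t ^ p *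
            Real.exp (-c * t) := by
  have hint : IntervalIntegrable (fun x : ℝ => x ^ n * Real.exp (-c * x))
      MeasureTheory.volume 0 t :=
    (Continuous.intervalIntegrable (by continuity) 0 t)
  have heq := intervalIntegral.integral_eq_sub_of_hasDerivAt
    (f := fun y : ℝ => -∑ p ∈ Finset.range (n+1),
      (Nat.factorial n : ℝ) / (Nat.factorial p : ℝ) * c ^ ((p : ℤ) - (n+1)) * y ^ p *
        Real.exp (-c * y))
    (fun x _ => aux_hasDerivAt c hc.ne' n x) hint
  rw [heq]
  beta_reduce
  have h0 : ∑ p ∈ Finset.range (n+1),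
      (Nat.factorial n : ℝ) / (Nat.factorial p : ℝ) * c ^ ((p : ℤ) - (n+1)) * (0:ℝ) ^ p *
        Real.exp (-c * 0) = (Nat.factorial n : ℝ) / c ^ (n+1) := by
    rw [Finset.sum_eq_single 0]
    · have hz : c ^ (((0:ℕ) : ℤ) - ((n:ℕ)+1)) = (c ^ (n+1))⁻¹ := by
        rw [show (((0:ℕ):ℤ) - ((n:ℕ)+1)) = -(((n+1:ℕ)):ℤ) by push_cast; ring, zpow_neg,
          zpow_natCast]
      rw [hz]
      norm_num
      rw [div_eq_mul_inv]
    · intro p _ hp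
      simp [zero_pow hp]
    · intro h
      simp at h
  rw [h0]
  ring
theorem shadowed_rician_cdf_closed_form
    (β δ α : ℝ) (hβδ : δ < β) (hδ : 0 ≤ δ) (hα : 0 < α)
    (m : ℕ) (hm : 1 ≤ m) (ζ : ℕ → ℝ)
    (hζ : ∀ κ, ζ κ = (-1) ^ κ * (ascPochhammer ℝ κ).eval (1 - (m : ℝ)) * δ ^ κ /
        ((Nat.factorial κ : ℝ)) ^ 2)
    (hnorm : α * ∑ l ∈ Finset.range m,
        ζ l * (Nat.factorial l : ℝ) / (β - δ) ^ (l + 1) = 1) :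
    ∀ t : ℝ, 0 ≤ t →
      ∫ x in (0 : ℝ)..t, α * ∑ κ ∈ Finset.range m, ζ κ * x ^ κ * Real.exp (-(β - δ) * x) =
        1 - α * ∑ l ∈ Finset.range m, ζ l *
          ∑ p ∈ Finset.range (l + 1),
            ((Nat.factorial l : ℝ) / (Nat.factorial p : ℝ)) *
              (β - δ) ^ (-(l + 1 - p : ℤ)) * t ^ p * Real.exp (-(β - δ) * t) := by
  intro t ht
  set c := β - δ with hcdef
  have hc : 0 < c := sub_pos.mpr hβδ
  have hInt : ∀ κ ∈ Finset.range m, IntervalIntegrable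
      (fun x : ℝ => ζ κ * x ^ κ * Real.exp (-c * x)) MeasureTheory.volume 0 t :=
    fun κ _ => Continuous.intervalIntegrable (by continuity) 0 t
  rw [intervalIntegral.integral_const_mul, intervalIntegral.integral_finset_sum hInt]
  have hterm : ∀ κ : ℕ, (∫ x in (0:ℝ)..t, ζ κ * x ^ κ * Real.exp (-c * x)) =
      ζ κ * ((Nat.factorial κ : ℝ) / c ^ (κ+1)) -
      ζ κ * ∑ p ∈ Finset.range (κ+1),
        (Nat.factorial κ : ℝ) / (Nat.factorial p : ℝ) * c ^ ((p : ℤ) - (κ+1)) * t ^ p *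
          Real.exp (-c * t) := by
    intro κ
    have hfn : (fun x : ℝ => ζ κ * x ^ κ * Real.exp (-c * x)) =
        fun x : ℝ => ζ κ * (x ^ κ * Real.exp (-c * x)) := by funext x; ring
    rw [hfn, intervalIntegral.integral_const_mul, aux_integral c hc κ t, mul_sub]
  have hsum : ∑ κ ∈ Finset.range m, (∫ x in (0:ℝ)..t, ζ κ * x ^ κ * Real.exp (-c * x)) =
      (∑ κ ∈ Finset.range m, ζ κ * ((Nat.factorial κ : ℝ) / c ^ (κ+1))) -
      ∑ κ ∈ Finset.range m, ζ κ * ∑ p ∈ Finset.range (κ+1),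
        (Nat.factorial κ : ℝ) / (Nat.factorial p : ℝ) * c ^ ((p : ℤ) - (κ+1)) * t ^ p *
          Real.exp (-c * t) := by
    rw [← Finset.sum_sub_distrib]
    exact Finset.sum_congr rfl fun κ _ => hterm κ
  rw [hsum, mul_sub]
  have hnorm' : α * ∑ l ∈ Finset.range m, ζ l * ((Nat.factorial l : ℝ) / c ^ (l+1)) = 1 := by
    rw [← hnorm]
    congr 1
    exact Finset.sum_congr rfl fun l _ => (mul_div_assoc _ _ _).symm
  rw [hnorm']
  congr 1
  congr 1
  apply Finset.sum_congr rfl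
  intro l _
  congr 1
  apply Finset.sum_congr rfl
  intro p _
  congr 2
  congr 1
  push_cast
  ring
end
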